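/- Let p, q ∈ [0, 1/4] and let n ≥ 16 be a natural number with n(p+q) ≤ 1/2. Suppose X, X' ~ Bin(n,p) and Y, Y' ~ Bin(n,q) are mutually independent. Then Δ := E[|X−Y| + |X'−Y'| − |X−X'| − |Y−Y'|] ≥ (1/8)·n²(p−q)². -/

import Mathlib

open MeasureTheory ProbabilityTheory

/-- The binomial distribution `Bin(n, p)`, as a measure on `ℝ` supported on `{0, 1, …, n}`. -/
noncomputable def binomialMeasure (n : ℕ) (p : ℝ) : Measure ℝ :=
  ∑ k ∈ Finset.range (n + 1),
    ENNReal.ofReal ((n.choose k : ℝ) * p ^ k * (1 - p) ^ (n - k)) • Measure.dirac (k : ℝ)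

lemma binom_apply (n : ℕ) (p : ℝ) {s : Set ℝ} (hs : MeasurableSet s) :
    binomialMeasure n p s = ∑ k ∈ Finset.range (n + 1),
      ENNReal.ofReal ((n.choose k : ℝ) * p ^ k * (1 - p) ^ (n - k)) * s.indicator 1 (k : ℝ) := by
  simp only [binomialMeasure, Measure.coe_finset_sum, Finset.sum_apply, Measure.smul_apply,
    Measure.dirac_apply' _ hs, smul_eq_mul]

lemma binom_sum_one (n : ℕ) (p : ℝ) :
    ∑ k ∈ Finset.range (n + 1), (n.choose k : ℝ) * p ^ k * (1 - p) ^ (n - k) = 1 := by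
  have := add_pow p (1 - p) n
  simp only [add_sub_cancel, one_pow] at this
  conv_rhs => rw [this]
  apply Finset.sum_congr rfl
  intro k _
  ring

lemma binom_Ioi_zero (n : ℕ) (p : ℝ) (hp0 : 0 ≤ p) (hp1 : p ≤ 1) :
    ((binomialMeasure n p) (Set.Ioi (0 : ℝ))).toReal = 1 - (1 - p) ^ n := by
  set c : ℕ → ℝ := fun k => (n.choose k : ℝ) * p ^ k * (1 - p) ^ (n - k) with hc
  have hcnn : ∀ k, 0 ≤ c k := fun k =>
    mul_nonneg (mul_nonneg (Nat.cast_nonneg _) (pow_nonneg hp0 _)) (pow_nonneg (by linarith) _)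
  rw [binom_apply n p measurableSet_Ioi]
  rw [ENNReal.toReal_sum (fun k _ => by
    apply ENNReal.mul_ne_top ENNReal.ofReal_ne_top
    rw [Set.indicator_apply]
    split <;> simp)]
  have hterm : ∀ k ∈ Finset.range (n + 1),
      (ENNReal.ofReal (c k) * (Set.Ioi (0:ℝ)).indicator 1 (k : ℝ)).toReal =
      if k = 0 then 0 else c k := by
    intro k _
    rcases Nat.eq_zero_or_pos k with h | h
    · subst h
      simp [Set.indicator_apply]
    · rw [if_neg (by omega)]
      rw [Set.indicator_of_mem (by simp [Set.mem_Ioi]; exact_mod_cast h)]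
      simp [ENNReal.toReal_ofReal (hcnn k)]
  rw [Finset.sum_congr rfl hterm]
  have h1 : ∑ k ∈ Finset.range (n + 1), (if k = 0 then (0:ℝ) else c k)
      = ∑ k ∈ Finset.range (n + 1), c k - c 0 := by
    rw [Finset.sum_range_succ', Finset.sum_range_succ']
    simp
  rw [h1, binom_sum_one n p, hc]
  simp

lemma binom_ae {Ω : Type*} [MeasurableSpace Ω] (μ : Measure Ω) (n : ℕ) (p : ℝ) (A : Ω → ℝ)
    (hAm : Measurable A) (hA : Measure.map A μ = binomialMeasure n p) :
    ∀ᵐ ω ∂μ, ∃ k : ℕ, k ≤ n ∧ A ω = k := by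
  set S : Set ℝ := ↑((Finset.range (n + 1)).image (Nat.cast : ℕ → ℝ)) with hS
  have hSm : MeasurableSet S := ((Finset.range (n + 1)).image (Nat.cast : ℕ → ℝ)).measurableSet
  have h0 : μ (A ⁻¹' Sᶜ) = 0 := by
    rw [← Measure.map_apply hAm hSm.compl, hA, binom_apply _ _ hSm.compl]
    apply Finset.sum_eq_zero
    intro k hk
    have hmem : (k : ℝ) ∈ S := by
      simp only [hS, Finset.coe_image, Set.mem_image, Finset.mem_coe]
      exact ⟨k, hk, rfl⟩
    simp [Set.indicator_of_notMem, hmem]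
  rw [ae_iff]
  refine measure_mono_null ?_ h0
  intro ω hω
  simp only [Set.mem_setOf_eq] at hω
  simp only [Set.mem_preimage, Set.mem_compl_iff]
  intro hmem
  simp only [hS, Finset.coe_image, Set.mem_image, Finset.mem_coe, Finset.mem_range] at hmem
  obtain ⟨k, hk, hke⟩ := hmem
  exact hω ⟨k, by omega, hke.symm⟩

lemma filter_range_lt (n m : ℕ) (h : m ≤ n) :
    (Finset.range n).filter (fun t => t < m) = Finset.range m := by
  ext t
  simp only [Finset.mem_filter, Finset.mem_range]
  omega

lemma min_integral {Ω : Type*} [MeasurableSpace Ω] (μ : Measure Ω) [IsProbabilityMeasure μ]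
    (n : ℕ) (A B : Ω → ℝ) (hAm : Measurable A) (hBm : Measurable B)
    (hA : ∀ᵐ ω ∂μ, ∃ k : ℕ, k ≤ n ∧ A ω = k) (hB : ∀ᵐ ω ∂μ, ∃ k : ℕ, k ≤ n ∧ B ω = k)
    (hAB : IndepFun A B μ) :
    Integrable (fun ω => min (A ω) (B ω)) μ ∧
    ∫ ω, min (A ω) (B ω) ∂μ = ∑ t ∈ Finset.range n,
      (μ (A ⁻¹' Set.Ioi (t : ℝ))).toReal * (μ (B ⁻¹' Set.Ioi (t : ℝ))).toReal := by
  set g : ℕ → Ω → ℝ := fun t => Set.indicator (A ⁻¹' Set.Ioi (t : ℝ) ∩ B ⁻¹' Set.Ioi (t : ℝ))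
    (fun _ => (1 : ℝ)) with hg
  have hmeas : ∀ t : ℕ, MeasurableSet (A ⁻¹' Set.Ioi (t : ℝ) ∩ B ⁻¹' Set.Ioi (t : ℝ)) :=
    fun t => (hAm measurableSet_Ioi).inter (hBm measurableSet_Ioi)
  have hgint : ∀ t : ℕ, Integrable (g t) μ :=
    fun t => (integrable_const (1 : ℝ)).indicator (hmeas t)
  have hae : (fun ω => min (A ω) (B ω)) =ᵐ[μ] fun ω => ∑ t ∈ Finset.range n, g t ω := by
    filter_upwards [hA, hB] with ω ⟨k, hk, hkA⟩ ⟨l, hl, hlB⟩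
    have : ∀ t : ℕ, g t ω = if t < min k l then (1 : ℝ) else 0 := by
      intro t
      simp only [hg]
      by_cases h : ω ∈ A ⁻¹' Set.Ioi (t : ℝ) ∩ B ⁻¹' Set.Ioi (t : ℝ)
      · have h' : t < min k l := by
          obtain ⟨h1, h2⟩ := h
          simp only [Set.mem_preimage, Set.mem_Ioi, hkA, hlB, Nat.cast_lt] at h1 h2
          omega
        rw [Set.indicator_of_mem h, if_pos h']
      · have h' : ¬ t < min k l := by
          intro hc
          exact h ⟨by simp [hkA, Nat.cast_lt]; omega, by simp [hlB, Nat.cast_lt]; omega⟩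
        rw [Set.indicator_of_notMem h, if_neg h']
    simp only [this, Finset.sum_boole, filter_range_lt n (min k l) (by omega)]
    rw [hkA, hlB, ← Nat.cast_min]
    simp
  have hint : Integrable (fun ω => min (A ω) (B ω)) μ :=
    (integrable_finset_sum (Finset.range n) (fun t _ => hgint t)).congr hae.symm
  refine ⟨hint, ?_⟩
  rw [integral_congr_ae hae, integral_finset_sum _ (fun t _ => hgint t)]
  apply Finset.sum_congr rfl
  intro t _
  rw [hg]
  rw [integral_indicator_const (1 : ℝ) (hmeas t), measureReal_def,
    hAB.measure_inter_preimage_eq_mul _ _ measurableSet_Ioi measurableSet_Ioi]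
  rw [ENNReal.toReal_mul]
  simp

lemma analytic_ineq (n : ℕ) (p q : ℝ) (hq0 : 0 ≤ q) (hqp : q ≤ p)
    (hp1 : p ≤ 1) (hnp : (n : ℝ) * p ≤ 1 / 2) :
    (n : ℝ) * (p - q) / 2 ≤ (1 - q) ^ n - (1 - p) ^ n := by
  have key := geom_sum₂_mul (1 - q) (1 - p) n
  have hsub : (1 - q) - (1 - p) = p - q := by ring
  rw [hsub] at key
  rw [← key]
  have hp0 : 0 ≤ p := le_trans hq0 hqp
  have hbern : (1 : ℝ) - (n : ℝ) * p ≤ (1 - p) ^ (n - 1) := by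
    have := one_add_mul_le_pow (a := -p) (by linarith) (n - 1)
    have hcast : ((n - 1 : ℕ) : ℝ) ≤ (n : ℝ) := by
      exact_mod_cast Nat.cast_le.2 (Nat.sub_le n 1)
    rw [show (1 : ℝ) + -p = 1 - p by ring] at this
    nlinarith [this, mul_le_mul_of_nonneg_right hcast hp0]
  have hterm : ∀ i ∈ Finset.range n, (1 - p) ^ (n - 1) ≤ (1 - q) ^ i * (1 - p) ^ (n - 1 - i) := by
    intro i hi
    have hi' : i < n := Finset.mem_range.1 hi
    have h1 : (1 - p) ^ (n - 1) = (1 - p) ^ i * (1 - p) ^ (n - 1 - i) := by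
      rw [← pow_add]
      congr 1
      omega
    rw [h1]
    apply mul_le_mul_of_nonneg_right _ (pow_nonneg (by linarith) _)
    exact pow_le_pow_left₀ (by linarith) (by linarith) i
  have hsumge : (n : ℝ) * ((1 : ℝ) - (n : ℝ) * p) ≤
      ∑ i ∈ Finset.range n, (1 - q) ^ i * (1 - p) ^ (n - 1 - i) := by
    calc (n : ℝ) * ((1 : ℝ) - (n : ℝ) * p)
        ≤ (n : ℝ) * (1 - p) ^ (n - 1) := by
          apply mul_le_mul_of_nonneg_left hbern (Nat.cast_nonneg n)
      _ = ∑ _i ∈ Finset.range n, (1 - p) ^ (n - 1) := by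
          rw [Finset.sum_const, Finset.card_range, nsmul_eq_mul]
      _ ≤ _ := Finset.sum_le_sum hterm
  have hpq : 0 ≤ p - q := by linarith
  calc (n : ℝ) * (p - q) / 2 = ((n : ℝ) * (1/2)) * (p - q) := by ring
    _ ≤ ((n : ℝ) * (1 - (n : ℝ) * p)) * (p - q) := by
        apply mul_le_mul_of_nonneg_right _ hpq
        apply mul_le_mul_of_nonneg_left (by linarith) (Nat.cast_nonneg n)
    _ ≤ (∑ i ∈ Finset.range n, (1 - q) ^ i * (1 - p) ^ (n - 1 - i)) * (p - q) :=
        mul_le_mul_of_nonneg_right hsumge hpq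

theorem binomial_expectation_gap_case {Ω : Type*} [MeasurableSpace Ω] (μ : Measure Ω)
    [IsProbabilityMeasure μ]
    (p q : ℝ) (hp : p ∈ Set.Icc (0 : ℝ) (1/4)) (hq : q ∈ Set.Icc (0 : ℝ) (1/4))
    (n : ℕ) (hn : 16 ≤ n)
    (hsum : (n : ℝ) * (p + q) ≤ 1/2)
    (X X' Y Y' : Ω → ℝ)
    (hXm : Measurable X) (hX'm : Measurable X') (hYm : Measurable Y) (hY'm : Measurable Y')
    (hindep : iIndepFun ![X, X', Y, Y'] μ)
    (hX : Measure.map X μ = binomialMeasure n p)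
    (hX' : Measure.map X' μ = binomialMeasure n p)
    (hY : Measure.map Y μ = binomialMeasure n q)
    (hY' : Measure.map Y' μ = binomialMeasure n q) :
    ∫ ω, (|X ω - Y ω| + |X' ω - Y' ω| - |X ω - X' ω| - |Y ω - Y' ω|) ∂μ ≥
      (1/8) * n ^ 2 * (p - q) ^ 2 := by
  obtain ⟨hp0, hp4⟩ := hp
  obtain ⟨hq0, hq4⟩ := hq
  have haeX := binom_ae μ n p X hXm hX
  have haeX' := binom_ae μ n p X' hX'm hX'
  have haeY := binom_ae μ n q Y hYm hY
  have haeY' := binom_ae μ n q Y' hY'm hY'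
  have iXX' : IndepFun X X' μ := by
    have h := hindep.indepFun (i := 0) (j := 1) (by decide)
    simpa using h
  have iYY' : IndepFun Y Y' μ := by
    have h := hindep.indepFun (i := 2) (j := 3) (by decide)
    simpa using h
  have iXY : IndepFun X Y μ := by
    have h := hindep.indepFun (i := 0) (j := 2) (by decide)
    simpa using h
  have iX'Y' : IndepFun X' Y' μ := by
    have h := hindep.indepFun (i := 1) (j := 3) (by decide)
    simpa using h
  obtain ⟨intXX', eXX'⟩ := min_integral μ n X X' hXm hX'm haeX haeX' iXX'
  obtain ⟨intYY', eYY'⟩ := min_integral μ n Y Y' hYm hY'm haeY haeY' iYY'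
  obtain ⟨intXY, eXY⟩ := min_integral μ n X Y hXm hYm haeX haeY iXY
  obtain ⟨intX'Y', eX'Y'⟩ := min_integral μ n X' Y' hX'm hY'm haeX' haeY' iX'Y'
  set fp : ℕ → ℝ := fun t => ((binomialMeasure n p) (Set.Ioi (t : ℝ))).toReal with hfp
  set fq : ℕ → ℝ := fun t => ((binomialMeasure n q) (Set.Ioi (t : ℝ))).toReal with hfq
  have hXp : ∀ t : ℕ, (μ (X ⁻¹' Set.Ioi (t : ℝ))).toReal = fp t := fun t => by
    show _ = ((binomialMeasure n p) (Set.Ioi (t : ℝ))).toReal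
    rw [← hX, Measure.map_apply hXm measurableSet_Ioi]
  have hX'p : ∀ t : ℕ, (μ (X' ⁻¹' Set.Ioi (t : ℝ))).toReal = fp t := fun t => by
    show _ = ((binomialMeasure n p) (Set.Ioi (t : ℝ))).toReal
    rw [← hX', Measure.map_apply hX'm measurableSet_Ioi]
  have hYq : ∀ t : ℕ, (μ (Y ⁻¹' Set.Ioi (t : ℝ))).toReal = fq t := fun t => by
    show _ = ((binomialMeasure n q) (Set.Ioi (t : ℝ))).toReal
    rw [← hY, Measure.map_apply hYm measurableSet_Ioi]
  have hY'q : ∀ t : ℕ, (μ (Y' ⁻¹' Set.Ioi (t : ℝ))).toReal = fq t := fun t => by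
    show _ = ((binomialMeasure n q) (Set.Ioi (t : ℝ))).toReal
    rw [← hY', Measure.map_apply hY'm measurableSet_Ioi]
  simp only [hXp, hX'p] at eXX'
  simp only [hYq, hY'q] at eYY'
  simp only [hXp, hYq] at eXY
  simp only [hX'p, hY'q] at eX'Y'
  have habs : ∀ a b : ℝ, |a - b| = a + b - 2 * min a b := by
    intro a b
    rcases le_total a b with h | h
    · rw [min_eq_left h, abs_of_nonpos (by linarith)]; ring
    · rw [min_eq_right h, abs_of_nonneg (by linarith)]; ring
  have hpt : (fun ω => |X ω - Y ω| + |X' ω - Y' ω| - |X ω - X' ω| - |Y ω - Y' ω|) =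
      (fun ω => 2 * min (X ω) (X' ω) + 2 * min (Y ω) (Y' ω)
        - 2 * min (X ω) (Y ω) - 2 * min (X' ω) (Y' ω)) := by
    funext ω
    rw [habs, habs, habs, habs]
    ring
  rw [ge_iff_le, hpt]
  have i2 : Integrable (fun ω => 2 * min (X ω) (X' ω) + 2 * min (Y ω) (Y' ω)) μ :=
    (intXX'.const_mul 2).add (intYY'.const_mul 2)
  have i3 : Integrable
      (fun ω => 2 * min (X ω) (X' ω) + 2 * min (Y ω) (Y' ω) - 2 * min (X ω) (Y ω)) μ :=
    i2.sub (intXY.const_mul 2)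
  rw [integral_sub i3 (intX'Y'.const_mul 2),
    integral_sub i2 (intXY.const_mul 2),
    integral_add (intXX'.const_mul 2) (intYY'.const_mul 2),
    integral_const_mul, integral_const_mul, integral_const_mul, integral_const_mul,
    eXX', eYY', eXY, eX'Y']
  have hcomb : ∑ t ∈ Finset.range n, (fp t - fq t) ^ 2 =
      (∑ t ∈ Finset.range n, fp t * fp t) + (∑ t ∈ Finset.range n, fq t * fq t)
      - (∑ t ∈ Finset.range n, fp t * fq t) - (∑ t ∈ Finset.range n, fp t * fq t) := by
    rw [← Finset.sum_add_distrib, ← Finset.sum_sub_distrib, ← Finset.sum_sub_distrib]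
    apply Finset.sum_congr rfl
    intros
    ring
  have h0mem : (0 : ℕ) ∈ Finset.range n := Finset.mem_range.2 (by omega)
  have hsingle : (fp 0 - fq 0) ^ 2 ≤ ∑ t ∈ Finset.range n, (fp t - fq t) ^ 2 :=
    Finset.single_le_sum (f := fun t => (fp t - fq t) ^ 2) (fun i _ => sq_nonneg _) h0mem
  have hfp0 : fp 0 = 1 - (1 - p) ^ n := by
    have := binom_Ioi_zero n p hp0 (by linarith)
    rw [hfp]
    simpa using this
  have hfq0 : fq 0 = 1 - (1 - q) ^ n := by
    have := binom_Ioi_zero n q hq0 (by linarith)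
    rw [hfq]
    simpa using this
  have hnp : (n : ℝ) * p ≤ 1 / 2 := by
    have : (n : ℝ) * q ≥ 0 := mul_nonneg (Nat.cast_nonneg n) hq0
    nlinarith
  have hnq : (n : ℝ) * q ≤ 1 / 2 := by
    have : (n : ℝ) * p ≥ 0 := mul_nonneg (Nat.cast_nonneg n) hp0
    nlinarith
  have hD : ((n : ℝ) * (p - q) / 2) ^ 2 ≤ (fp 0 - fq 0) ^ 2 := by
    rw [hfp0, hfq0]
    rcases le_total q p with h | h
    · have hA := analytic_ineq n p q hq0 h (by linarith) hnp
      have hnn : 0 ≤ (n : ℝ) * (p - q) / 2 :=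
        div_nonneg (mul_nonneg (Nat.cast_nonneg n) (by linarith)) (by norm_num)
      calc ((n : ℝ) * (p - q) / 2) ^ 2 ≤ ((1 - q) ^ n - (1 - p) ^ n) ^ 2 :=
            pow_le_pow_left₀ hnn hA 2
        _ = (1 - (1 - p) ^ n - (1 - (1 - q) ^ n)) ^ 2 := by ring
    · have hA := analytic_ineq n q p hp0 h (by linarith) hnq
      have hnn : 0 ≤ (n : ℝ) * (q - p) / 2 :=
        div_nonneg (mul_nonneg (Nat.cast_nonneg n) (by linarith)) (by norm_num)
      calc ((n : ℝ) * (p - q) / 2) ^ 2 = ((n : ℝ) * (q - p) / 2) ^ 2 := by ring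
        _ ≤ ((1 - p) ^ n - (1 - q) ^ n) ^ 2 := pow_le_pow_left₀ hnn hA 2
        _ = (1 - (1 - p) ^ n - (1 - (1 - q) ^ n)) ^ 2 := by ring
  have haux : (1/8 : ℝ) * (n : ℝ) ^ 2 * (p - q) ^ 2 ≤ 2 * ((n : ℝ) * (p - q) / 2) ^ 2 := by
    nlinarith [sq_nonneg ((n : ℝ) * (p - q))]
  linarith [hcomb, hsingle, hD, haux]
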